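/- Let t ≥ 2 be an integer and n ≥ 2t+2 be an even integer. Consider the binary words x1 = 0^{n/2−1} 1 0^{n/2} and x2 = 0^{n/2} 1 0^{n/2−1}, and let M = V_2(n,t) − Σ_{i=0}^{t} C(n/2−1, ⌊i/2⌋)·C(n/2−1, ⌈i/2⌉). Then: (1) there exist sets D1 and D2 of deletion vectors for length-n words, each vector of weight at most t, with |D1| = |D2| = M, such that the output multiset of D1 on x1 equals the output multiset of D2 on x2; and (2) for any such pair of sets of deletion vectors of weight at most t with equal output multisets on x1 and x2, |D1| ≤ M. In other words, exactly M + 1 channels are enough to distinguish x1 from x2 in the multiset model with at most t deletions per channel. -/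

import Mathlib

/-- Applying a deletion vector `S` (a set of coordinate positions) to a word
`x` of length `n`: delete the entries at positions in `S`, keeping the rest in order. -/
def delWord {q n : ℕ} (x : Fin n → Fin q) (S : Finset (Fin n)) : List (Fin q) :=
  ((Finset.univ \ S).sort (· ≤ ·)).map x

/-- Binary Hamming ball volume `V₂(n,t) = ∑_{i=0}^{t} C(n,i)`. -/
def V₂ (n t : ℕ) : ℕ := ∑ i ∈ Finset.range (t + 1), n.choose i

namespace DelAux
open Finset

def wrd (p q : ℕ) : List (Fin 2) := List.replicate p 0 ++ 1 :: List.replicate q 0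

lemma wrd_inj {p q p' q' : ℕ} (h : wrd p q = wrd p' q') : p = p' ∧ q = q' := by
  induction p generalizing p' with
  | zero =>
    cases p' with
    | zero => simpa [wrd] using h
    | succ p' => simp [wrd, List.replicate_succ] at h
  | succ p ih =>
    cases p' with
    | zero => simp [wrd, List.replicate_succ] at h
    | succ p' =>
      simp only [wrd, List.replicate_succ, List.cons_append, List.cons.injEq] at h
      have := ih (p' := p') (by simpa [wrd] using h.2)
      exact ⟨by omega, this.2⟩

lemma wrd_ne_replicate (p q ℓ : ℕ) : wrd p q ≠ List.replicate ℓ (0 : Fin 2) := by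
  intro h
  have h1 : (1 : Fin 2) ∈ wrd p q := by simp [wrd]
  rw [h] at h1
  have := List.eq_of_mem_replicate h1
  exact absurd this (by decide)

variable {n : ℕ}

def ind (m : Fin n) : Fin n → Fin 2 := fun i : Fin n => if (i : ℕ) = (m : ℕ) then 1 else 0

lemma map_ind_sorted (m : Fin n) : ∀ (l : List (Fin n)), l.Pairwise (· < ·) →
    l.map (ind m) =
      if m ∈ l then wrd (l.countP (fun i => decide (i < m))) (l.countP (fun i => decide (m < i)))
      else List.replicate l.length 0 := by
  intro l hl
  induction l with
  | nil => simp
  | cons c tl ih =>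
    have hs : tl.Pairwise (· < ·) := hl.of_cons
    have hrel : ∀ y ∈ tl, c < y := fun y hy => (List.pairwise_cons.mp hl).1 y hy
    rcases lt_trichotomy c m with hc | hc | hc
    · have hne : c ≠ m := ne_of_lt hc
      have hvne : ((c : ℕ) = (m : ℕ)) = False := by
        simp only [eq_iff_iff, iff_false, Fin.val_eq_val]; exact hne
      simp only [List.map_cons, List.countP_cons, List.mem_cons, ind, hvne, if_false]
      rw [show (List.map (ind m) tl) = _ from ih hs]
      by_cases hm : m ∈ tl
      · simp only [hm, or_true, if_true]
        simp [hc, lt_asymm hc, wrd, List.replicate_succ]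
      · have hne' : ¬ (m = c ∨ m ∈ tl) := by
          rintro (h | h); exact hne h.symm; exact hm h
        simp only [hm, if_false, hne', if_false]
        rw [if_neg (show ¬ (m = c ∨ False) by rintro (hh | hh); exacts [hne hh.symm, hh])]
        simp [List.replicate_succ]
    · have hnm : m ∉ tl := by rw [← hc]; exact fun hm => lt_irrefl _ (hrel _ hm)
      have hmem : (m = c ∨ m ∈ tl) := Or.inl hc.symm
      have h1 : tl.countP (fun i => decide (i < m)) = 0 := by
        rw [List.countP_eq_zero]
        intro y hy
        simp only [decide_eq_true_eq, not_lt]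
        exact le_of_lt (hc ▸ hrel y hy)
      have h2 : tl.countP (fun i => decide (m < i)) = tl.length := by
        rw [List.countP_eq_length]
        intro y hy
        simp only [decide_eq_true_eq]
        exact hc ▸ hrel y hy
      have h3 : List.map (ind m) tl = List.replicate tl.length 0 := by
        rw [List.eq_replicate_iff]
        refine ⟨by simp, ?_⟩
        intro x hx
        rcases List.mem_map.mp hx with ⟨y, hy, hyx⟩
        have : (y : ℕ) ≠ (m : ℕ) := by
          rw [Fin.val_ne_iff]
          exact ne_of_gt (hc ▸ hrel y hy)
        simpa [ind, this] using hyx.symm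
      simp only [List.map_cons, List.countP_cons, List.mem_cons, hmem, if_true, h1, h2, h3, ind]
      simp [hc, wrd]
    · -- m < c : everything > m
      have hnm : ¬ (m = c ∨ m ∈ tl) := by
        rintro (h | h)
        · exact absurd hc (by simp [h])
        · exact absurd (lt_trans hc (hrel _ h)) (lt_irrefl m)
      simp only [List.mem_cons, hnm, if_false]
      rw [List.eq_replicate_iff]
      refine ⟨by simp, ?_⟩
      intro x hx
      rcases List.mem_map.mp hx with ⟨y, hy, hyx⟩
      have hy' : m < y := by
        rcases List.mem_cons.mp hy with h | h
        · exact h ▸ hc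
        · exact lt_trans hc (hrel _ h)
      have : (y : ℕ) ≠ (m : ℕ) := by rw [Fin.val_ne_iff]; exact ne_of_gt hy'
      simpa [ind, this] using hyx.symm


lemma countP_sort {α : Type*} [LinearOrder α] (s : Finset α) (p : α → Prop) [DecidablePred p] :
    (s.sort (· ≤ ·)).countP (fun a => decide (p a)) = (s.filter p).card := by
  rw [(Finset.sort_perm_toList s (· ≤ ·)).countP_eq]
  have h1 : s.toList.countP (fun a => decide (p a)) = Multiset.countP p (↑s.toList : Multiset α) := (Multiset.coe_countP p _).symm
  rw [h1]
  have h2 : (↑s.toList : Multiset α) = s.1 := s.1.coe_toList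
  rw [h2, Multiset.countP_eq_card_filter]
  rw [Finset.card_def, Finset.filter_val]

variable {n : ℕ}

lemma filter_lt_card (m : Fin n) : (univ.filter (fun i : Fin n => i < m)).card = (m : ℕ) := by
  have : univ.filter (fun i : Fin n => i < m) = Finset.Iio m := by
    ext x; simp
  rw [this, Fin.card_Iio]

lemma filter_gt_card (m : Fin n) : (univ.filter (fun i : Fin n => m < i)).card = n - 1 - (m : ℕ) := by
  have : univ.filter (fun i : Fin n => m < i) = Finset.Ioi m := by
    ext x; simp
  rw [this, Fin.card_Ioi]

lemma sdiff_filter_card (S : Finset (Fin n)) (p : Fin n → Prop) [DecidablePred p] :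
    ((univ \ S).filter p).card = (univ.filter p).card - (S.filter p).card := by
  have h1 : (univ \ S).filter p = (univ.filter p) \ (S.filter p) := by
    ext x; simp; tauto
  rw [h1, card_sdiff_of_subset (filter_subset_filter _ (subset_univ S))]


lemma delWord_ind (m : Fin n) (S : Finset (Fin n)) :
    delWord (ind m) S =
      if m ∈ S then List.replicate (n - S.card) 0
      else wrd ((m : ℕ) - (S.filter (fun i => i < m)).card)
        ((n - 1 - (m : ℕ)) - (S.filter (fun i => m < i)).card) := by
  unfold delWord
  rw [map_ind_sorted m _ (Finset.sortedLT_sort _).pairwise]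
  have hmem : m ∈ (univ \ S).sort (· ≤ ·) ↔ m ∉ S := by
    rw [Finset.mem_sort]; simp
  have hlen : ((univ \ S).sort (· ≤ ·)).length = n - S.card := by
    rw [Finset.length_sort, card_sdiff_of_subset (subset_univ S), card_univ, Fintype.card_fin]
  by_cases hm : m ∈ S
  · rw [if_neg (fun h => (hmem.mp h) hm), if_pos hm, hlen]
  · rw [if_pos (hmem.mpr hm), if_neg hm]
    rw [countP_sort _ (fun i => i < m), countP_sort _ (fun i => m < i)]
    rw [sdiff_filter_card, sdiff_filter_card, filter_lt_card, filter_gt_card]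

lemma card_split (m : Fin n) (S : Finset (Fin n)) (hm : m ∉ S) :
    S.card = (S.filter (fun i => i < m)).card + (S.filter (fun i => m < i)).card := by
  rw [← Finset.card_filter_add_card_filter_not (p := fun i => i < m) (s := S)]
  congr 1
  apply congrArg
  apply Finset.filter_congr
  intro x hx
  have hne : x ≠ m := fun h => hm (h ▸ hx)
  simp only [not_lt, eq_iff_iff]
  constructor
  · intro h; exact lt_of_le_of_ne h (Ne.symm hne)
  · intro h; exact le_of_lt h

lemma countProd (m : Fin n) (u v : ℕ) :
    ((univ : Finset (Finset (Fin n))).filter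
      (fun S => m ∉ S ∧ (S.filter (fun i => i < m)).card = u ∧ (S.filter (fun i => m < i)).card = v)).card
    = (m : ℕ).choose u * (n - 1 - (m : ℕ)).choose v := by
  have key : ((univ : Finset (Finset (Fin n))).filter
      (fun S => m ∉ S ∧ (S.filter (fun i => i < m)).card = u ∧ (S.filter (fun i => m < i)).card = v)).card
      = ((Finset.Iio m).powersetCard u ×ˢ (Finset.Ioi m).powersetCard v).card := by
    apply Finset.card_nbij' (i := fun S => (S.filter (fun i => i < m), S.filter (fun i => m < i)))
      (j := fun P => P.1 ∪ P.2)
    · intro S hS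
      simp only [Finset.mem_coe, mem_filter, mem_univ, true_and] at hS
      simp only [Finset.mem_coe, mem_product, mem_powersetCard]
      exact ⟨⟨fun x hx => by simpa using (mem_filter.mp hx).2, hS.2.1⟩,
             ⟨fun x hx => by simpa using (mem_filter.mp hx).2, hS.2.2⟩⟩
    · intro P hP
      simp only [Finset.mem_coe, mem_product, mem_powersetCard] at hP
      obtain ⟨⟨h1s, h1c⟩, ⟨h2s, h2c⟩⟩ := hP
      have hmem1 : ∀ x ∈ P.1, x < m := fun x hx => by simpa using h1s hx
      have hmem2 : ∀ x ∈ P.2, m < x := fun x hx => by simpa using h2s hx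
      have hf1 : (P.1 ∪ P.2).filter (fun i => i < m) = P.1 := by
        ext x
        simp only [mem_filter, mem_union]
        constructor
        · rintro ⟨h | h, hlt⟩
          · exact h
          · exact absurd hlt (lt_asymm (hmem2 x h))
        · intro h; exact ⟨Or.inl h, hmem1 x h⟩
      have hf2 : (P.1 ∪ P.2).filter (fun i => m < i) = P.2 := by
        ext x
        simp only [mem_filter, mem_union]
        constructor
        · rintro ⟨h | h, hlt⟩
          · exact absurd hlt (lt_asymm (hmem1 x h))
          · exact h
        · intro h; exact ⟨Or.inr h, hmem2 x h⟩
      simp only [Finset.mem_coe, mem_filter, mem_univ, true_and]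
      refine ⟨?_, by rw [hf1]; exact h1c, by rw [hf2]; exact h2c⟩
      intro hmm
      rcases mem_union.mp hmm with h | h
      · exact lt_irrefl m (hmem1 m h)
      · exact lt_irrefl m (hmem2 m h)
    · intro S hS
      simp only [Finset.mem_coe, mem_filter, mem_univ, true_and] at hS
      ext x
      simp only [mem_union, mem_filter]
      constructor
      · rintro (⟨h, _⟩ | ⟨h, _⟩) <;> exact h
      · intro hx
        have hne : x ≠ m := fun h => hS.1 (h ▸ hx)
        rcases lt_or_gt_of_ne hne with h | h
        · exact Or.inl ⟨hx, h⟩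
        · exact Or.inr ⟨hx, h⟩
    · intro P hP
      simp only [Finset.mem_coe, mem_product, mem_powersetCard] at hP
      obtain ⟨⟨h1s, h1c⟩, ⟨h2s, h2c⟩⟩ := hP
      have hmem1 : ∀ x ∈ P.1, x < m := fun x hx => by simpa using h1s hx
      have hmem2 : ∀ x ∈ P.2, m < x := fun x hx => by simpa using h2s hx
      have hf1 : (P.1 ∪ P.2).filter (fun i => i < m) = P.1 := by
        ext x
        simp only [mem_filter, mem_union]
        constructor
        · rintro ⟨h | h, hlt⟩
          · exact h
          · exact absurd hlt (lt_asymm (hmem2 x h))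
        · intro h; exact ⟨Or.inl h, hmem1 x h⟩
      have hf2 : (P.1 ∪ P.2).filter (fun i => m < i) = P.2 := by
        ext x
        simp only [mem_filter, mem_union]
        constructor
        · rintro ⟨h | h, hlt⟩
          · exact absurd hlt (lt_asymm (hmem1 x h))
          · exact h
        · intro h; exact ⟨Or.inr h, hmem2 x h⟩
      dsimp only
      rw [hf1, hf2]
  rw [key, Finset.card_product, Finset.card_powersetCard, Finset.card_powersetCard,
    Fin.card_Iio, Fin.card_Ioi]

variable {t : ℕ}

def Om (n t : ℕ) : Finset (Finset (Fin n)) := univ.filter (fun S => S.card ≤ t)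

def N (t : ℕ) (m : Fin n) (w : List (Fin 2)) : ℕ :=
  ((Om n t).filter (fun S => delWord (ind m) S = w)).card

lemma uS_le (m : Fin n) (S : Finset (Fin n)) : (S.filter (fun i => i < m)).card ≤ (m : ℕ) := by
  rw [← filter_lt_card m]
  exact card_le_card (filter_subset_filter _ (subset_univ S))

lemma vS_le (m : Fin n) (S : Finset (Fin n)) :
    (S.filter (fun i => m < i)).card ≤ n - 1 - (m : ℕ) := by
  rw [← filter_gt_card m]
  exact card_le_card (filter_subset_filter _ (subset_univ S))

lemma mem_fiber_one (m : Fin n) (S : Finset (Fin n)) (u v : ℕ) (hu : u ≤ (m : ℕ))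
    (hv : v ≤ n - 1 - (m : ℕ)) :
    delWord (ind m) S = wrd ((m : ℕ) - u) ((n - 1 - (m : ℕ)) - v) ↔
      m ∉ S ∧ (S.filter (fun i => i < m)).card = u ∧ (S.filter (fun i => m < i)).card = v := by
  rw [delWord_ind]
  by_cases hm : m ∈ S
  · rw [if_pos hm]
    simp only [hm, not_true, false_and, iff_false]
    exact fun h => wrd_ne_replicate _ _ _ h.symm
  · rw [if_neg hm]
    simp only [hm, not_false_iff, true_and]
    constructor
    · intro h
      obtain ⟨h1, h2⟩ := wrd_inj h
      have := uS_le m S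
      have := vS_le m S
      omega
    · rintro ⟨h1, h2⟩
      rw [h1, h2]

lemma fiber_one (m : Fin n) (u v : ℕ) (hu : u ≤ (m : ℕ)) (hv : v ≤ n - 1 - (m : ℕ)) :
    N t m (wrd ((m : ℕ) - u) ((n - 1 - (m : ℕ)) - v)) =
      if u + v ≤ t then (m : ℕ).choose u * (n - 1 - (m : ℕ)).choose v else 0 := by
  unfold N Om
  rw [filter_filter]
  by_cases hle : u + v ≤ t
  · rw [if_pos hle, ← countProd m u v]
    congr 1
    apply Finset.filter_congr
    intro S _
    rw [mem_fiber_one m S u v hu hv]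
    constructor
    · rintro ⟨_, h⟩; exact h
    · rintro ⟨h1, h2, h3⟩
      refine ⟨?_, h1, h2, h3⟩
      rw [card_split m S h1, h2, h3]
      exact hle
  · rw [if_neg hle]
    rw [Finset.card_eq_zero, Finset.filter_eq_empty_iff]
    intro S _
    rintro ⟨hc, hf⟩
    rw [mem_fiber_one m S u v hu hv] at hf
    obtain ⟨h1, h2, h3⟩ := hf
    rw [card_split m S h1, h2, h3] at hc
    exact hle hc

lemma fiber_one_zero (m : Fin n) (p q : ℕ) (hp : (m : ℕ) < p) : N t m (wrd p q) = 0 := by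
  unfold N
  rw [Finset.card_eq_zero, Finset.filter_eq_empty_iff]
  intro S _
  rw [delWord_ind]
  by_cases hm : m ∈ S
  · rw [if_pos hm]; exact fun h => wrd_ne_replicate _ _ _ h.symm
  · rw [if_neg hm]
    intro h
    have := (wrd_inj h).1
    omega

lemma mem_fiber_zero (m : Fin n) (S : Finset (Fin n)) (ℓ : ℕ) :
    delWord (ind m) S = List.replicate ℓ 0 ↔ m ∈ S ∧ n - S.card = ℓ := by
  rw [delWord_ind]
  by_cases hm : m ∈ S
  · rw [if_pos hm]
    simp only [hm, true_and]
    constructor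
    · intro h
      have := congrArg List.length h
      simpa using this
    · intro h; rw [h]
  · rw [if_neg hm]
    simp only [hm, false_and, iff_false]
    exact wrd_ne_replicate _ _ _

lemma fiber_zero_eq (m m' : Fin n) (ℓ : ℕ) :
    N t m (List.replicate ℓ 0) = N t m' (List.replicate ℓ 0) := by
  unfold N Om
  rw [filter_filter, filter_filter]
  apply Finset.card_nbij' (i := fun S => S.image (Equiv.swap m m'))
    (j := fun S => S.image (Equiv.swap m m'))
  · intro S hS
    simp only [Finset.mem_coe, mem_filter, mem_univ, true_and] at hS ⊢
    obtain ⟨hc, hf⟩ := hS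
    rw [mem_fiber_zero] at hf
    have hcard : (S.image (Equiv.swap m m')).card = S.card :=
      Finset.card_image_of_injective S (Equiv.injective _)
    rw [mem_fiber_zero]
    refine ⟨by rw [hcard]; exact hc, ?_, by rw [hcard]; exact hf.2⟩
    rw [Finset.mem_image]
    exact ⟨m, hf.1, Equiv.swap_apply_left m m'⟩
  · intro S hS
    simp only [Finset.mem_coe, mem_filter, mem_univ, true_and] at hS ⊢
    obtain ⟨hc, hf⟩ := hS
    rw [mem_fiber_zero] at hf
    have hcard : (S.image (Equiv.swap m m')).card = S.card :=
      Finset.card_image_of_injective S (Equiv.injective _)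
    rw [mem_fiber_zero]
    refine ⟨by rw [hcard]; exact hc, ?_, by rw [hcard]; exact hf.2⟩
    rw [Finset.mem_image]
    exact ⟨m', hf.1, Equiv.swap_apply_right m m'⟩
  · intro S _
    dsimp only
    rw [Finset.image_image]
    have : (Equiv.swap m m') ∘ (Equiv.swap m m') = id := by
      funext x; simp
    rw [this, Finset.image_id]
  · intro S _
    dsimp only
    rw [Finset.image_image]
    have : (Equiv.swap m m') ∘ (Equiv.swap m m') = id := by
      funext x; simp
    rw [this, Finset.image_id]

def g (a k v : ℕ) : ℕ := a.choose (k - v) * a.choose v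

lemma g_exchange (a k v : ℕ) (hk : k ≤ a) (hv : v < k) :
    ((v + 1) * (a - k + v + 1)) * g a k (v + 1) = ((k - v) * (a - v)) * g a k v := by
  have c1 : a.choose (v + 1) * (v + 1) = a.choose v * (a - v) := Nat.choose_succ_right_eq a v
  have c2 : a.choose (k - v) * (k - v) = a.choose (k - v - 1) * (a - (k - v - 1)) := by
    have h : k - v - 1 + 1 = k - v := by omega
    rw [← h, Nat.choose_succ_right_eq a (k - v - 1), h]
  have h2 : a - (k - v - 1) = a - k + v + 1 := by omega
  rw [h2] at c2
  have h3 : k - (v + 1) = k - v - 1 := by omega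
  unfold g
  rw [h3]
  calc ((v + 1) * (a - k + v + 1)) * (a.choose (k - v - 1) * a.choose (v + 1))
      = (a.choose (k - v - 1) * (a - k + v + 1)) * (a.choose (v + 1) * (v + 1)) := by ring
    _ = (a.choose (k - v - 1) * (a - k + v + 1)) * (a.choose v * (a - v)) := by rw [c1]
    _ = (a.choose (k - v) * (k - v)) * (a.choose v * (a - v)) := by
        rw [show a.choose (k - v - 1) * (a - k + v + 1) = a.choose (k - v) * (k - v) by
          rw [mul_comm (a.choose (k-v)) (k-v), ← c2]; ring]
    _ = ((k - v) * (a - v)) * (a.choose (k - v) * a.choose v) := by ring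

lemma g_mono (a k v : ℕ) (hk : k ≤ a) (hv : 2 * v + 1 ≤ k) : g a k v ≤ g a k (v + 1) := by
  have hvk : v < k := by omega
  have hcoeff : (v + 1) * (a - k + v + 1) ≤ (k - v) * (a - v) :=
    Nat.mul_le_mul (by omega) (by omega)
  have hex := g_exchange a k v hk hvk
  have h1 : ((k - v) * (a - v)) * g a k v ≤ ((k - v) * (a - v)) * g a k (v + 1) := by
    rw [← hex]
    exact Nat.mul_le_mul_right _ hcoeff
  have hpos : 0 < (k - v) * (a - v) := Nat.mul_pos (by omega) (by omega)
  exact Nat.le_of_mul_le_mul_left h1 hpos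

lemma g_anti (a k v : ℕ) (hk : k ≤ a) (hv : k ≤ 2 * v) (hvk : v < k) :
    g a k (v + 1) ≤ g a k v := by
  have hcoeff : (k - v) * (a - v) ≤ (v + 1) * (a - k + v + 1) :=
    Nat.mul_le_mul (by omega) (by omega)
  have hex := g_exchange a k v hk hvk
  have h1 : ((v + 1) * (a - k + v + 1)) * g a k (v + 1) ≤ ((v + 1) * (a - k + v + 1)) * g a k v := by
    rw [hex]
    exact Nat.mul_le_mul_right _ hcoeff
  have hpos : 0 < (v + 1) * (a - k + v + 1) := Nat.mul_pos (by omega) (by omega)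
  exact Nat.le_of_mul_le_mul_left h1 hpos

lemma telescope (a k : ℕ) (hk : k ≤ a) :
    g a k 0 + ∑ v ∈ Finset.range k, (g a k (v + 1) - g a k v) = g a k ((k + 1) / 2) := by
  set v0 := (k + 1) / 2 with hv0
  have hv0k : v0 ≤ k := by omega
  have aux : ∀ j, j ≤ v0 → g a k 0 + ∑ v ∈ Finset.range j, (g a k (v + 1) - g a k v) = g a k j := by
    intro j
    induction j with
    | zero => simp
    | succ j ih =>
      intro hj
      rw [Finset.sum_range_succ, ← Nat.add_assoc, ih (by omega)]
      have hle : g a k j ≤ g a k (j + 1) := g_mono a k j hk (by omega)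
      omega
  rw [Finset.range_eq_Ico, ← Finset.sum_Ico_consecutive _ (Nat.zero_le v0) hv0k]
  have hzero : ∑ v ∈ Finset.Ico v0 k, (g a k (v + 1) - g a k v) = 0 := by
    apply Finset.sum_eq_zero
    intro v hv
    rw [Finset.mem_Ico] at hv
    have := g_anti a k v hk (by omega) hv.2
    omega
  rw [hzero, Nat.add_zero, ← Finset.range_eq_Ico]
  exact aux v0 le_rfl

lemma term_eq (a k v : ℕ) (hv1 : 1 ≤ v) (hvk : v ≤ k) :
    a.choose (k - v) * (a + 1).choose v - (a + 1).choose (k - v + 1) * a.choose (v - 1)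
      = g a k v - g a k (v - 1) := by
  have e1 : (a + 1).choose v = a.choose (v - 1) + a.choose v := by
    have h : v = (v - 1) + 1 := by omega
    rw [h, Nat.choose_succ_succ]
    congr 2 <;> omega
  have e2 : (a + 1).choose (k - v + 1) = a.choose (k - v) + a.choose (k - v + 1) := by
    rw [Nat.choose_succ_succ]
  have e3 : g a k (v - 1) = a.choose (k - v + 1) * a.choose (v - 1) := by
    unfold g
    congr 2
    omega
  have e4 : g a k v = a.choose (k - v) * a.choose v := rfl
  have key : a.choose (k - v) * (a + 1).choose v + g a k (v - 1)
      = (a + 1).choose (k - v + 1) * a.choose (v - 1) + g a k v := by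
    rw [e1, e2, e3, e4]; ring
  omega

-- extra: q-part too large
lemma fiber_one_zero' (m : Fin n) (p q : ℕ) (hq : n - 1 - (m : ℕ) < q) : N t m (wrd p q) = 0 := by
  unfold N
  rw [Finset.card_eq_zero, Finset.filter_eq_empty_iff]
  intro S _
  rw [delWord_ind]
  by_cases hm : m ∈ S
  · rw [if_pos hm]; exact fun h => wrd_ne_replicate _ _ _ h.symm
  · rw [if_neg hm]
    intro h
    have := (wrd_inj h).2
    omega

lemma card_Om : (Om n t).card = V₂ n t := by
  have h1 : (Om n t).card = ∑ i ∈ Finset.range (t + 1), ((Om n t).filter (fun S => S.card = i)).card := by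
    apply Finset.card_eq_sum_card_fiberwise
    intro S hS
    rw [Finset.mem_coe, Finset.mem_range]
    have : S.card ≤ t := by simpa [Om] using hS
    omega
  rw [h1]
  unfold V₂
  apply Finset.sum_congr rfl
  intro i hi
  rw [Finset.mem_range] at hi
  have h2 : (Om n t).filter (fun S => S.card = i) = Finset.powersetCard i univ := by
    ext S
    simp only [Om, Finset.mem_filter, Finset.mem_univ, true_and,
      Finset.mem_powersetCard_univ]
    omega
  rw [h2, Finset.card_powersetCard, Finset.card_univ, Fintype.card_fin]

section Main
variable (a b : ℕ) (m1 m2 : Fin n)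

/-- the union of output images -/
def Wset (n t : ℕ) (m1 m2 : Fin n) : Finset (List (Fin 2)) :=
  (Om n t).image (delWord (ind m1)) ∪ (Om n t).image (delWord (ind m2))

lemma sum_N_eq (m : Fin n) (hm : m = m1 ∨ m = m2) :
    ∑ w ∈ Wset n t m1 m2, N t m w = V₂ n t := by
  rw [← card_Om (n := n) (t := t)]
  symm
  apply Finset.card_eq_sum_card_fiberwise
  intro S hS
  unfold Wset
  rcases hm with rfl | rfl
  · exact Finset.mem_union_left _ (Finset.mem_image_of_mem _ hS)
  · exact Finset.mem_union_right _ (Finset.mem_image_of_mem _ hS)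

lemma N_eq_zero_of_not_mem (m : Fin n) (w : List (Fin 2)) (hm : m = m1 ∨ m = m2)
    (hw : w ∉ Wset n t m1 m2) : N t m w = 0 := by
  unfold N
  rw [Finset.card_eq_zero, Finset.filter_eq_empty_iff]
  intro S hS hf
  apply hw
  unfold Wset
  rcases hm with rfl | rfl
  · exact Finset.mem_union_left _ (Finset.mem_image.mpr ⟨S, hS, hf⟩)
  · exact Finset.mem_union_right _ (Finset.mem_image.mpr ⟨S, hS, hf⟩)

lemma shape_aux (m : Fin n) (hm : (m : ℕ) ≤ b) (hq : n - 1 - (m : ℕ) ≤ b)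
    (S : Finset (Fin n)) :
    (∃ ℓ, delWord (ind m) S = List.replicate ℓ 0) ∨
      (∃ p q, p ≤ b ∧ q ≤ b ∧ delWord (ind m) S = wrd p q) := by
  rw [delWord_ind]
  by_cases hmS : m ∈ S
  · rw [if_pos hmS]; exact Or.inl ⟨_, rfl⟩
  · rw [if_neg hmS]
    refine Or.inr ⟨_, _, ?_, ?_, rfl⟩ <;> omega

lemma shape_of_mem (hm1 : (m1 : ℕ) = a) (hm2 : (m2 : ℕ) = b) (hab : a + 1 = b)
    (hnb : n = 2 * b) (w : List (Fin 2)) (hw : w ∈ Wset n t m1 m2) :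
    (∃ ℓ, w = List.replicate ℓ 0) ∨ (∃ p q, p ≤ b ∧ q ≤ b ∧ w = wrd p q) := by
  unfold Wset at hw
  rcases Finset.mem_union.mp hw with h | h
  · rcases Finset.mem_image.mp h with ⟨S, _, rfl⟩
    exact shape_aux b m1 (by omega) (by omega) S
  · rcases Finset.mem_image.mp h with ⟨S, _, rfl⟩
    exact shape_aux b m2 (by omega) (by omega) S


def G (a b t u v : ℕ) : ℕ :=
  (if u + v ≤ t then a.choose u * b.choose v else 0) -
    (if 1 ≤ v ∧ u + v ≤ t then b.choose (u + 1) * a.choose (v - 1) else 0)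

lemma H_eq_G (hm1 : (m1 : ℕ) = a) (hm2 : (m2 : ℕ) = b) (hab : a + 1 = b) (hnb : n = 2 * b)
    (u v : ℕ) (hu : u ≤ a) (hv : v ≤ b) :
    N t m1 (wrd (a - u) (b - v)) - N t m2 (wrd (a - u) (b - v)) = G a b t u v := by
  have hq1 : n - 1 - (m1 : ℕ) = b := by omega
  have hq2 : n - 1 - (m2 : ℕ) = a := by omega
  have hN1 : N t m1 (wrd (a - u) (b - v)) = if u + v ≤ t then a.choose u * b.choose v else 0 := by
    have h := fiber_one (t := t) m1 u v (by omega) (by omega)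
    rw [hq1, hm1] at h
    exact h
  by_cases hv1 : 1 ≤ v
  · have hN2 : N t m2 (wrd (a - u) (b - v)) =
        if u + v ≤ t then b.choose (u + 1) * a.choose (v - 1) else 0 := by
      have h := fiber_one (t := t) m2 (u + 1) (v - 1) (by omega) (by omega)
      rw [hq2, hm2] at h
      have e1 : b - (u + 1) = a - u := by omega
      have e2 : a - (v - 1) = b - v := by omega
      have e3 : u + 1 + (v - 1) = u + v := by omega
      rw [e1, e2, e3] at h
      exact h
    rw [hN1, hN2]
    simp [G, hv1]
  · have hv0 : v = 0 := by omega
    subst hv0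
    have hN2 : N t m2 (wrd (a - u) (b - 0)) = 0 := by
      apply fiber_one_zero' m2
      omega
    rw [hN1, hN2]
    simp [G]

lemma sum_gap (hm1 : (m1 : ℕ) = a) (hm2 : (m2 : ℕ) = b) (hab : a + 1 = b)
    (hnb : n = 2 * b) (hta : t ≤ a) :
    ∑ w ∈ Wset n t m1 m2, (N t m1 w - N t m2 w)
      = ∑ k ∈ Finset.range (t + 1), a.choose (k / 2) * a.choose ((k + 1) / 2) := by
  classical
  set h : List (Fin 2) → ℕ := fun w => N t m1 w - N t m2 w with hh
  set J : Finset (ℕ × ℕ) := (Finset.range (b + 1)) ×ˢ (Finset.range (b + 1)) with hJ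
  set imgJ : Finset (List (Fin 2)) := J.image (fun pq => wrd pq.1 pq.2) with himgJ
  -- step A : sum over W equals sum over imgJ
  have hA : ∑ w ∈ Wset n t m1 m2, h w = ∑ w ∈ imgJ, h w := by
    have hWU : ∑ w ∈ Wset n t m1 m2, h w = ∑ w ∈ Wset n t m1 m2 ∪ imgJ, h w := by
      apply Finset.sum_subset Finset.subset_union_left
      intro w _ hw
      have : N t m1 w = 0 := N_eq_zero_of_not_mem m1 m2 m1 w (Or.inl rfl) hw
      simp [hh, this]
    have hJU : ∑ w ∈ imgJ, h w = ∑ w ∈ Wset n t m1 m2 ∪ imgJ, h w := by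
      apply Finset.sum_subset Finset.subset_union_right
      intro w hwU hw
      have hwW : w ∈ Wset n t m1 m2 := by
        rcases Finset.mem_union.mp hwU with h' | h'
        · exact h'
        · exact absurd h' hw
      rcases shape_of_mem a b m1 m2 hm1 hm2 hab hnb w hwW with ⟨ℓ, rfl⟩ | ⟨p, q, hp, hq, rfl⟩
      · have := fiber_zero_eq (t := t) m1 m2 ℓ
        simp [hh, this]
      · exact absurd (Finset.mem_image.mpr ⟨(p, q), by
          simp [hJ, Finset.mem_product, Finset.mem_range]; omega, rfl⟩) hw
    rw [hWU, ← hJU]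
  rw [hA]
  -- step B : sum over image = sum over J
  have hB : ∑ w ∈ imgJ, h w = ∑ pq ∈ J, h (wrd pq.1 pq.2) := by
    rw [himgJ]
    apply Finset.sum_image
    intro x _ y _ hxy
    obtain ⟨h1, h2⟩ := wrd_inj hxy
    exact Prod.ext h1 h2
  rw [hB]
  -- step C : restrict to p ≤ a
  have hC : ∑ pq ∈ J, h (wrd pq.1 pq.2) = ∑ pq ∈ J.filter (fun pq => pq.1 ≤ a), h (wrd pq.1 pq.2) := by
    symm
    apply Finset.sum_subset (Finset.filter_subset _ _)
    intro pq hpq hnpq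
    have hpa : a < pq.1 := by
      by_contra hcon
      exact hnpq (Finset.mem_filter.mpr ⟨hpq, by omega⟩)
    have : N t m1 (wrd pq.1 pq.2) = 0 := fiber_one_zero m1 pq.1 pq.2 (by omega)
    simp [hh, this]
  rw [hC]
  -- step D : reindex (p,q) -> (u,v) = (a-p, b-q)
  have hD : ∑ pq ∈ J.filter (fun pq => pq.1 ≤ a), h (wrd pq.1 pq.2)
      = ∑ uv ∈ (Finset.range (a + 1)) ×ˢ (Finset.range (b + 1)), G a b t uv.1 uv.2 := by
    apply Finset.sum_nbij' (i := fun pq => (a - pq.1, b - pq.2)) (j := fun uv => (a - uv.1, b - uv.2))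
    · intro pq hpq
      simp only [Finset.mem_product, Finset.mem_range]
      omega
    · intro uv huv
      simp only [Finset.mem_product, Finset.mem_range] at huv
      simp only [hJ, Finset.mem_filter, Finset.mem_product, Finset.mem_range]
      omega
    · intro pq hpq
      simp only [hJ, Finset.mem_filter, Finset.mem_product, Finset.mem_range] at hpq
      have : a - (a - pq.1) = pq.1 := by omega
      have h2 : b - (b - pq.2) = pq.2 := by omega
      simp [this, h2]
    · intro uv huv
      simp only [Finset.mem_product, Finset.mem_range] at huv
      have : a - (a - uv.1) = uv.1 := by omega
      have h2 : b - (b - uv.2) = uv.2 := by omega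
      simp [this, h2]
    · intro pq hpq
      simp only [hJ, Finset.mem_filter, Finset.mem_product, Finset.mem_range] at hpq
      have hG := H_eq_G (t := t) a b m1 m2 hm1 hm2 hab hnb (a - pq.1) (b - pq.2) (by omega) (by omega)
      have e1 : a - (a - pq.1) = pq.1 := by omega
      have e2 : b - (b - pq.2) = pq.2 := by omega
      rw [e1, e2] at hG
      exact hG
  rw [hD]
  -- step E : restrict to u + v ≤ t
  have hE : ∑ uv ∈ (Finset.range (a + 1)) ×ˢ (Finset.range (b + 1)), G a b t uv.1 uv.2
      = ∑ uv ∈ ((Finset.range (a + 1)) ×ˢ (Finset.range (b + 1))).filter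
          (fun uv => uv.1 + uv.2 ≤ t), G a b t uv.1 uv.2 := by
    symm
    apply Finset.sum_subset (Finset.filter_subset _ _)
    intro uv huv hnuv
    have hgt : ¬ (uv.1 + uv.2 ≤ t) := by
      by_contra hcon
      exact hnuv (Finset.mem_filter.mpr ⟨huv, hcon⟩)
    simp [G, hgt]
  rw [hE]
  -- step F : reindex to sigma over k
  have hF : ∑ uv ∈ ((Finset.range (a + 1)) ×ˢ (Finset.range (b + 1))).filter
        (fun uv => uv.1 + uv.2 ≤ t), G a b t uv.1 uv.2
      = ∑ x ∈ (Finset.range (t + 1)).sigma (fun k => Finset.range (k + 1)),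
          G a b t (x.1 - x.2) x.2 := by
    apply Finset.sum_nbij' (i := fun uv => (⟨uv.1 + uv.2, uv.2⟩ : Σ _ : ℕ, ℕ))
      (j := fun x => (x.1 - x.2, x.2))
    · intro uv huv
      simp only [Finset.mem_filter, Finset.mem_product, Finset.mem_range] at huv
      simp only [Finset.mem_sigma, Finset.mem_range]
      omega
    · intro x hx
      simp only [Finset.mem_sigma, Finset.mem_range] at hx
      simp only [Finset.mem_filter, Finset.mem_product, Finset.mem_range]
      omega
    · intro uv huv
      simp
    · intro x hx
      simp only [Finset.mem_sigma, Finset.mem_range] at hx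
      have : x.1 - x.2 + x.2 = x.1 := by omega
      simp [this]
    · intro uv huv
      have : uv.1 + uv.2 - uv.2 = uv.1 := by omega
      simp [this]
  rw [hF, Finset.sum_sigma]
  -- step H : per-k computation
  apply Finset.sum_congr rfl
  intro k hk
  rw [Finset.mem_range] at hk
  have hka : k ≤ a := by omega
  have hkt : k ≤ t := by omega
  rw [Finset.sum_range_succ']
  have hzero : G a b t (k - 0) 0 = g a k 0 := by
    simp only [G, Nat.sub_zero, Nat.add_zero, if_pos hkt]
    have h2 : ¬ (1 ≤ 0 ∧ k ≤ t) := by omega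
    rw [if_neg h2]
    simp [g]
  have hterm : ∀ v ∈ Finset.range k, G a b t (k - (v + 1)) (v + 1) = g a k (v + 1) - g a k v := by
    intro v hv
    rw [Finset.mem_range] at hv
    have hcond : k - (v + 1) + (v + 1) = k := by omega
    have hcond2 : k - (v + 1) + (v + 1) ≤ t := by omega
    simp only [G, if_pos hcond2]
    have hc3 : (1 ≤ v + 1 ∧ k - (v + 1) + (v + 1) ≤ t) := ⟨by omega, hcond2⟩
    rw [if_pos hc3]
    have hte := term_eq a k (v + 1) (by omega) (by omega)
    rw [hab] at hte
    have e1 : k - (v + 1) + 1 = k - v := by omega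
    have e2 : v + 1 - 1 = v := by omega
    rw [e1, e2] at hte
    rw [e1, e2]
    exact hte
  rw [Finset.sum_congr rfl hterm, hzero, add_comm, telescope a k hka]
  unfold g
  have : k - (k + 1) / 2 = k / 2 := by omega
  rw [this]



lemma key_sum (hm1 : (m1 : ℕ) = a) (hm2 : (m2 : ℕ) = b) (hab : a + 1 = b)
    (hnb : n = 2 * b) (hta : t ≤ a) :
    ∑ w ∈ Wset n t m1 m2, min (N t m1 w) (N t m2 w)
      + ∑ k ∈ Finset.range (t + 1), a.choose (k / 2) * a.choose ((k + 1) / 2) = V₂ n t := by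
  rw [← sum_gap a b m1 m2 hm1 hm2 hab hnb hta, ← Finset.sum_add_distrib]
  rw [← sum_N_eq m1 m2 m1 (Or.inl rfl)]
  apply Finset.sum_congr rfl
  intro w _
  omega

end Main
end DelAux

/-- For even `n ≥ 2t+2` and `t ≥ 2`, `x1 = 0^{n/2-1} 1 0^{n/2}` and `x2 = 0^{n/2} 1 0^{n/2-1}`,
with `M = V₂(n,t) - ∑_{i=0}^{t} C(n/2-1,⌊i/2⌋)·C(n/2-1,⌈i/2⌉)`: exactly `M` channels with
distinct deletion vectors of weight at most `t` can produce equal output multisets from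
`x1` and `x2`, so exactly `M + 1` channels distinguish them in the multiset model. -/
theorem multiset_model_exact_channel_number_at_most_t
    (t n : ℕ) (ht : 2 ≤ t) (hn : 2 * t + 2 ≤ n) (heven : Even n) :
    let x1 : Fin n → Fin 2 := fun i => if (i : ℕ) = n / 2 - 1 then 1 else 0
    let x2 : Fin n → Fin 2 := fun i => if (i : ℕ) = n / 2 then 1 else 0
    let M := V₂ n t -
      ∑ i ∈ Finset.range (t + 1), (n / 2 - 1).choose (i / 2) * (n / 2 - 1).choose ((i + 1) / 2)
    (∃ D1 D2 : Finset (Finset (Fin n)),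
      (∀ S ∈ D1, S.card ≤ t) ∧ (∀ S ∈ D2, S.card ≤ t) ∧
      D1.card = M ∧ D2.card = M ∧
      Multiset.map (delWord x1) D1.val = Multiset.map (delWord x2) D2.val) ∧
    (∀ D1 D2 : Finset (Finset (Fin n)),
      (∀ S ∈ D1, S.card ≤ t) → (∀ S ∈ D2, S.card ≤ t) →
      D1.card = D2.card →
      Multiset.map (delWord x1) D1.val = Multiset.map (delWord x2) D2.val →
      D1.card ≤ M) := by
  intro x1 x2 M
  classical
  open Finset DelAux in
  have hmod : n % 2 = 0 := Nat.even_iff.mp heven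
  have hm1lt : n / 2 - 1 < n := by omega
  have hm2lt : n / 2 < n := by omega
  set m1 : Fin n := ⟨n / 2 - 1, hm1lt⟩ with hm1def
  set m2 : Fin n := ⟨n / 2, hm2lt⟩ with hm2def
  have hm1 : (m1 : ℕ) = n / 2 - 1 := rfl
  have hm2 : (m2 : ℕ) = n / 2 := rfl
  have hab : (n / 2 - 1) + 1 = n / 2 := by omega
  have hnb : n = 2 * (n / 2) := by omega
  have hta : t ≤ n / 2 - 1 := by omega
  have hx1 : x1 = DelAux.ind m1 := rfl
  have hx2 : x2 = DelAux.ind m2 := rfl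
  have hMdef : M = V₂ n t -
      ∑ i ∈ Finset.range (t + 1), (n / 2 - 1).choose (i / 2) * (n / 2 - 1).choose ((i + 1) / 2) := rfl
  have hkey := DelAux.key_sum (n / 2 - 1) (n / 2) m1 m2 hm1 hm2 hab hnb hta
  set W := DelAux.Wset n t m1 m2 with hWdef
  have hMmin : M = ∑ w ∈ W, min (N t m1 w) (N t m2 w) := by omega
  -- fibers
  set A1 : List (Fin 2) → Finset (Finset (Fin n)) :=
    fun w => (Om n t).filter (fun S => delWord (DelAux.ind m1) S = w) with hA1
  set A2 : List (Fin 2) → Finset (Finset (Fin n)) :=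
    fun w => (Om n t).filter (fun S => delWord (DelAux.ind m2) S = w) with hA2
  have hA1card : ∀ w, (A1 w).card = N t m1 w := fun w => rfl
  have hA2card : ∀ w, (A2 w).card = N t m2 w := fun w => rfl
  constructor
  · -- existence
    have hch1 : ∀ w, ∃ E, E ⊆ A1 w ∧ E.card = min (N t m1 w) (N t m2 w) := by
      intro w
      obtain ⟨E, hE, hEc⟩ := Finset.exists_subset_card_eq
        (show min (N t m1 w) (N t m2 w) ≤ (A1 w).card by rw [hA1card]; exact min_le_left _ _)
      exact ⟨E, hE, hEc⟩
    have hch2 : ∀ w, ∃ E, E ⊆ A2 w ∧ E.card = min (N t m1 w) (N t m2 w) := by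
      intro w
      obtain ⟨E, hE, hEc⟩ := Finset.exists_subset_card_eq
        (show min (N t m1 w) (N t m2 w) ≤ (A2 w).card by rw [hA2card]; exact min_le_right _ _)
      exact ⟨E, hE, hEc⟩
    choose E1 hE1sub hE1card using hch1
    choose E2 hE2sub hE2card using hch2
    refine ⟨W.biUnion E1, W.biUnion E2, ?_, ?_, ?_, ?_, ?_⟩
    · intro S hS
      rcases Finset.mem_biUnion.mp hS with ⟨w, _, hSw⟩
      have := hE1sub w hSw
      simp only [hA1, Finset.mem_filter, Om, Finset.mem_univ, true_and] at this
      exact this.1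
    · intro S hS
      rcases Finset.mem_biUnion.mp hS with ⟨w, _, hSw⟩
      have := hE2sub w hSw
      simp only [hA2, Finset.mem_filter, Om, Finset.mem_univ, true_and] at this
      exact this.1
    · rw [Finset.card_biUnion, hMmin]
      · exact Finset.sum_congr rfl (fun w _ => hE1card w)
      · intro x _ y _ hxy
        show Disjoint (E1 x) (E1 y)
        rw [Finset.disjoint_left]
        intro S hSx hSy
        have h1 := (Finset.mem_filter.mp (hE1sub x hSx)).2
        have h2 := (Finset.mem_filter.mp (hE1sub y hSy)).2
        exact hxy (h1 ▸ h2 ▸ rfl)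
    · rw [Finset.card_biUnion, hMmin]
      · exact Finset.sum_congr rfl (fun w _ => hE2card w)
      · intro x _ y _ hxy
        show Disjoint (E2 x) (E2 y)
        rw [Finset.disjoint_left]
        intro S hSx hSy
        have h1 := (Finset.mem_filter.mp (hE2sub x hSx)).2
        have h2 := (Finset.mem_filter.mp (hE2sub y hSy)).2
        exact hxy (h1 ▸ h2 ▸ rfl)
    · -- multiset equality
      apply Multiset.ext.mpr
      intro c
      rw [Multiset.count_map, Multiset.count_map]
      have hfil1 : (W.biUnion E1).val.filter (fun S => c = delWord x1 S) =
          ((W.biUnion E1).filter (fun S => c = delWord x1 S)).val := by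
        rw [Finset.filter_val]
      have hfil2 : (W.biUnion E2).val.filter (fun S => c = delWord x2 S) =
          ((W.biUnion E2).filter (fun S => c = delWord x2 S)).val := by
        rw [Finset.filter_val]
      rw [hfil1, hfil2]
      show ((W.biUnion E1).filter (fun S => c = delWord x1 S)).card =
        ((W.biUnion E2).filter (fun S => c = delWord x2 S)).card
      have he1 : (W.biUnion E1).filter (fun S => c = delWord x1 S) =
          if c ∈ W then E1 c else ∅ := by
        ext S
        simp only [Finset.mem_filter, Finset.mem_biUnion]
        constructor
        · rintro ⟨⟨w, hwW, hSw⟩, hc⟩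
          have hfw := (Finset.mem_filter.mp (hE1sub w hSw)).2
          rw [hx1] at hc
          have hcw : c = w := by rw [hc, hfw]
          rw [if_pos (hcw ▸ hwW)]
          exact hcw ▸ hSw
        · intro hS
          by_cases hcW : c ∈ W
          · rw [if_pos hcW] at hS
            have hfw := (Finset.mem_filter.mp (hE1sub c hS)).2
            exact ⟨⟨c, hcW, hS⟩, by rw [hx1, hfw]⟩
          · rw [if_neg hcW] at hS
            exact absurd hS (Finset.notMem_empty S)
      have he2 : (W.biUnion E2).filter (fun S => c = delWord x2 S) =
          if c ∈ W then E2 c else ∅ := by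
        ext S
        simp only [Finset.mem_filter, Finset.mem_biUnion]
        constructor
        · rintro ⟨⟨w, hwW, hSw⟩, hc⟩
          have hfw := (Finset.mem_filter.mp (hE2sub w hSw)).2
          rw [hx2] at hc
          have hcw : c = w := by rw [hc, hfw]
          rw [if_pos (hcw ▸ hwW)]
          exact hcw ▸ hSw
        · intro hS
          by_cases hcW : c ∈ W
          · rw [if_pos hcW] at hS
            have hfw := (Finset.mem_filter.mp (hE2sub c hS)).2
            exact ⟨⟨c, hcW, hS⟩, by rw [hx2, hfw]⟩
          · rw [if_neg hcW] at hS
            exact absurd hS (Finset.notMem_empty S)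
      rw [he1, he2]
      by_cases hcW : c ∈ W
      · rw [if_pos hcW, if_pos hcW, hE1card, hE2card]
      · rw [if_neg hcW, if_neg hcW]
  · -- upper bound
    intro D1 D2 hD1t hD2t hcard hmeq
    have hsub1 : ∀ S ∈ D1, S ∈ Om n t := by
      intro S hS
      simp only [Om, Finset.mem_filter, Finset.mem_univ, true_and]
      exact hD1t S hS
    have hsub2 : ∀ S ∈ D2, S ∈ Om n t := by
      intro S hS
      simp only [Om, Finset.mem_filter, Finset.mem_univ, true_and]
      exact hD2t S hS
    have hcnt : ∀ c, (D1.filter (fun S => delWord x1 S = c)).card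
        = (D2.filter (fun S => delWord x2 S = c)).card := by
      intro c
      have h1 := congrArg (Multiset.count c) hmeq
      rw [Multiset.count_map, Multiset.count_map] at h1
      have e1 : D1.val.filter (fun S => c = delWord x1 S) =
          (D1.filter (fun S => delWord x1 S = c)).val := by
        rw [Finset.filter_val]
        congr 1
        funext S
        simp [eq_comm]
      have e2 : D2.val.filter (fun S => c = delWord x2 S) =
          (D2.filter (fun S => delWord x2 S = c)).val := by
        rw [Finset.filter_val]
        congr 1
        funext S
        simp [eq_comm]
      rw [e1, e2] at h1
      exact h1
    have hD1 : D1.card = ∑ w ∈ W, (D1.filter (fun S => delWord x1 S = w)).card := by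
      apply Finset.card_eq_sum_card_fiberwise
      intro S hS
      rw [hWdef]
      unfold DelAux.Wset
      rw [hx1]
      exact Finset.mem_union_left _ (Finset.mem_image_of_mem _ (hsub1 S hS))
    rw [hD1, hMmin]
    apply Finset.sum_le_sum
    intro w _
    have hle1 : (D1.filter (fun S => delWord x1 S = w)).card ≤ N t m1 w := by
      rw [← hA1card]
      apply Finset.card_le_card
      intro S hS
      rw [Finset.mem_filter] at hS ⊢
      exact ⟨hsub1 S hS.1, by rw [← hx1]; exact hS.2⟩
    have hle2 : (D1.filter (fun S => delWord x1 S = w)).card ≤ N t m2 w := by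
      rw [hcnt w, ← hA2card]
      apply Finset.card_le_card
      intro S hS
      rw [Finset.mem_filter] at hS ⊢
      exact ⟨hsub2 S hS.1, by rw [← hx2]; exact hS.2⟩
    omega
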